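/- Suppose n items are placed into m accounts, each item in each account independently with probability p ∈ (0,1), except that every item of a fixed set T of size at most l (with l fixed) appears in designated accounts so that each account in a family A of targeted accounts contains at least one item of T. If m = ⌈C ln n⌉ with C > l / ln(1/(1-(1-p)^l)), then with probability tending to 1 as n → ∞, every subset S disjoint from T with |S| ≤ l fails to intersect all accounts of any sub-collection of at least m accounts whose item sets (outside T) are independent Bernoulli subsets with parameter p. -/

import Mathlib

open MeasureTheory ProbabilityTheory Filter Set

section aux

variable {Ω ι κ : Type*} [MeasurableSpace Ω] {μ : Measure Ω} [IsProbabilityMeasure μ]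
  {B : ι × κ → Set Ω}

omit [IsProbabilityMeasure μ] in
lemma aux_compl_inter (h : iIndepSet B μ) (F : Finset ι) (a : κ) :
    μ (⋂ i ∈ F, (B (i, a))ᶜ) = ∏ i ∈ F, μ ((B (i, a))ᶜ) := by
  classical
  have h' : iIndep (fun ij => MeasurableSpace.generateFrom {B ij}) μ :=
    (iIndepSet_iff_iIndep _ _).1 h
  have hinj : Function.Injective (fun i : ι => (i, a)) := fun x y hxy => congrArg Prod.fst hxy
  have := h'.meas_biInter (S := F.image fun i => (i, a)) (s := fun ij => (B ij)ᶜ)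
    (fun ij _ => (MeasurableSpace.measurableSet_generateFrom
      (show B ij ∈ {B ij} from rfl)).compl)
  rw [Finset.set_biInter_finset_image] at this
  rw [this, Finset.prod_image (fun x _ y _ hxy => hinj hxy)]

lemma aux_union_meas (hB : ∀ ij, MeasurableSet (B ij)) (h : iIndepSet B μ) (F : Finset ι) (a : κ)
    {pr : ℝ} (hpr0 : 0 ≤ pr) (hp : ∀ i ∈ F, μ (B (i, a)) = ENNReal.ofReal pr) :
    μ (⋃ i ∈ F, B (i, a)) = 1 - ENNReal.ofReal (1 - pr) ^ F.card := by
  have hc : μ (⋂ i ∈ F, (B (i, a))ᶜ) = ENNReal.ofReal (1 - pr) ^ F.card := by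
    rw [aux_compl_inter h F a]
    rw [Finset.prod_congr rfl (fun i hi => ?_), Finset.prod_const]
    rw [prob_compl_eq_one_sub (hB (i, a)), hp i hi,
      ENNReal.ofReal_sub _ hpr0, ENNReal.ofReal_one]
  have hcompl : (⋃ i ∈ F, B (i, a))ᶜ = ⋂ i ∈ F, (B (i, a))ᶜ := by
    simp [Set.compl_iUnion]
  have hm : MeasurableSet (⋃ i ∈ F, B (i, a)) :=
    F.measurableSet_biUnion fun i _ => hB (i, a)
  have h1 : (1 : ENNReal) - μ (⋃ i ∈ F, B (i, a)) = ENNReal.ofReal (1 - pr) ^ F.card := by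
    rw [← prob_compl_eq_one_sub hm, hcompl, hc]
  calc μ (⋃ i ∈ F, B (i, a)) = 1 - (1 - μ (⋃ i ∈ F, B (i, a))) :=
        (ENNReal.sub_sub_cancel ENNReal.one_ne_top prob_le_one).symm
    _ = 1 - ENNReal.ofReal (1 - pr) ^ F.card := by rw [h1]

lemma aux_inter_union (hB : ∀ ij, MeasurableSet (B ij)) (h : iIndepSet B μ)
    (F : Finset ι) (J : Finset κ) :
    μ (⋂ j ∈ J, ⋃ i ∈ F, B (i, j)) = ∏ j ∈ J, μ (⋃ i ∈ F, B (i, j)) := by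
  classical
  induction J using Finset.induction with
  | empty => simp
  | insert a J ha ih =>
    have hIndep := iIndepSet.indep_generateFrom_of_disjoint hB h
      {ij : ι × κ | ij.2 = a} {ij : ι × κ | ij.2 ∈ J}
      (by
        rw [Set.disjoint_left]
        rintro ⟨i, j⟩ h1 h2
        exact ha (h1 ▸ h2))
    have h1 : MeasurableSet[MeasurableSpace.generateFrom
        {t | ∃ ij ∈ {ij : ι × κ | ij.2 = a}, B ij = t}] (⋃ i ∈ F, B (i, a)) :=
      Finset.measurableSet_biUnion F
        (fun i _ => MeasurableSpace.measurableSet_generateFrom ⟨(i, a), rfl, rfl⟩)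
    have h2 : MeasurableSet[MeasurableSpace.generateFrom
        {t | ∃ ij ∈ {ij : ι × κ | ij.2 ∈ J}, B ij = t}] (⋂ j ∈ J, ⋃ i ∈ F, B (i, j)) :=
      Finset.measurableSet_biInter J
        (fun j hj => Finset.measurableSet_biUnion F
          (fun i _ => MeasurableSpace.measurableSet_generateFrom ⟨(i, j), hj, rfl⟩))
    have hmul := (Indep_iff _ _ _).1 hIndep _ _ h1 h2
    rw [Finset.set_biInter_insert, Finset.prod_insert ha, hmul, ih]

end aux

/-- items `{1,...,n}` are placed into `m = ⌈C ln n⌉` targeted accounts; each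
account contains at least one item of a fixed set `T` of size at most `l`, while the
memberships of the items outside `T` are independent Bernoulli(p) events. If
`C > l / ln(1/(1-(1-p)^l))`, then with probability tending to 1 as `n → ∞`, every set `S`
disjoint from `T` with `|S| ≤ l` fails to intersect all of the accounts. -/
theorem stmt_15 (p C : ℝ) (l : ℕ) (hl : 1 ≤ l) (hp0 : 0 < p) (hp1 : p < 1)
    (hC : C > l / Real.log (1 / (1 - (1 - p) ^ l)))
    (Ω : ℕ → Type*) [∀ n, MeasurableSpace (Ω n)]
    (μ : ∀ n, Measure (Ω n)) [∀ n, IsProbabilityMeasure (μ n)]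
    (T : ∀ n : ℕ, Finset (Fin n)) (hT : ∀ n, (T n).card ≤ l)
    (A : ∀ n : ℕ, Fin ⌈C * Real.log n⌉₊ → Ω n → Finset (Fin n))
    (htarget : ∀ (n : ℕ) (j) (ω : Ω n), ((T n) ∩ A n j ω).Nonempty)
    (hmeas : ∀ (n : ℕ) (j) (i : Fin n), MeasurableSet {ω | i ∈ A n j ω})
    (hindep : ∀ n : ℕ, iIndepSet
      (fun ij : {i : Fin n // i ∉ T n} × Fin ⌈C * Real.log n⌉₊ =>
        {ω | (ij.1 : Fin n) ∈ A n ij.2 ω}) (μ n))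
    (hprob : ∀ (n : ℕ) (j) (i : Fin n), i ∉ T n →
      μ n {ω | i ∈ A n j ω} = ENNReal.ofReal p) :
    Tendsto
      (fun n : ℕ => (μ n {ω | ∀ S : Finset (Fin n), Disjoint S (T n) → S.card ≤ l →
          ∃ j, S ∩ A n j ω = ∅}).toReal)
      atTop (nhds 1) := by
  classical
  -- basic real facts
  set q : ℝ := 1 - (1 - p) ^ l with hq_def
  have h1p0 : 0 < 1 - p := by linarith
  have h1p1 : 1 - p < 1 := by linarith
  have hpl0 : 0 < (1 - p) ^ l := pow_pos h1p0 l
  have hpl1 : (1 - p) ^ l < 1 := pow_lt_one₀ h1p0.le h1p1 (by omega)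
  have hq0 : 0 < q := by simp only [hq_def]; linarith
  have hq1 : q < 1 := by simp only [hq_def]; linarith
  have hL : 0 < Real.log (1 / q) := Real.log_pos (by rw [lt_div_iff₀ hq0]; linarith)
  have hCL : (l : ℝ) < C * Real.log (1 / q) := (div_lt_iff₀ hL).1 hC
  have hCpos : 0 < C := by
    rcases le_or_gt C 0 with h | h
    · exfalso
      have : C * Real.log (1 / q) ≤ 0 := mul_nonpos_of_nonpos_of_nonneg h hL.le
      have hl1 : (1 : ℝ) ≤ (l : ℝ) := by exact_mod_cast hl
      linarith
    · exact h
  set r : ℝ := l + C * Real.log q with hr_def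
  have hr : r < 0 := by
    have : Real.log (1 / q) = - Real.log q := by rw [one_div, Real.log_inv]
    rw [this] at hCL
    simp only [hr_def]; linarith
  -- the good sets and bad sets
  set M : ℕ → ℕ := fun n => ⌈C * Real.log n⌉₊ with hM_def
  set good : ∀ n, Set (Ω n) := fun n => {ω | ∀ S : Finset (Fin n), Disjoint S (T n) → S.card ≤ l →
    ∃ j, S ∩ A n j ω = ∅} with hgood_def
  have hempty_iff : ∀ (n : ℕ) (S : Finset (Fin n)) (j) (ω : Ω n),
      S ∩ A n j ω = ∅ ↔ ∀ i ∈ S, i ∉ A n j ω := by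
    intro n S j ω
    simp [Finset.eq_empty_iff_forall_notMem, Finset.mem_inter]
  have hmeas_empty : ∀ (n : ℕ) (S : Finset (Fin n)) (j),
      MeasurableSet {ω | S ∩ A n j ω = ∅} := by
    intro n S j
    have : {ω | S ∩ A n j ω = ∅} = ⋂ i ∈ S, {ω | i ∈ A n j ω}ᶜ := by
      ext ω
      simp [hempty_iff n S j ω]
    rw [this]
    exact Finset.measurableSet_biInter S fun i _ => (hmeas n j i).compl
  have hgood_meas : ∀ n, MeasurableSet (good n) := by
    intro n
    have : good n = ⋂ (S : Finset (Fin n)), ⋂ (_ : Disjoint S (T n)), ⋂ (_ : S.card ≤ l),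
        ⋃ j, {ω | S ∩ A n j ω = ∅} := by
      ext ω
      simp only [hgood_def, Set.mem_setOf_eq, Set.mem_iInter, Set.mem_iUnion]
    rw [this]
    exact MeasurableSet.iInter fun S => MeasurableSet.iInter fun _ => MeasurableSet.iInter
      fun _ => MeasurableSet.iUnion fun j => hmeas_empty n S j
  -- the per-S bound
  have hperS : ∀ (n : ℕ) (S : Finset (Fin n)), Disjoint S (T n) → S.card ≤ l →
      μ n (⋂ j, {ω | (S ∩ A n j ω).Nonempty}) ≤ ENNReal.ofReal q ^ M n := by
    intro n S hdisj hcard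
    set B : {i : Fin n // i ∉ T n} × Fin ⌈C * Real.log n⌉₊ → Set (Ω n) :=
      fun ij => {ω | (ij.1 : Fin n) ∈ A n ij.2 ω} with hB_def
    have hB : ∀ ij, MeasurableSet (B ij) := fun ij => hmeas n ij.2 ij.1
    set F : Finset {i : Fin n // i ∉ T n} := S.subtype (fun i => i ∉ T n) with hF_def
    have hFcard : F.card = S.card := by
      rw [hF_def, Finset.card_subtype,
        Finset.filter_true_of_mem (fun i hi => Finset.disjoint_left.1 hdisj hi)]
    have hEq : ∀ j, (⋃ i' ∈ F, B (i', j)) = {ω | (S ∩ A n j ω).Nonempty} := by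
      intro j
      ext ω
      simp only [hB_def, hF_def, Set.mem_iUnion, Finset.mem_subtype, Set.mem_setOf_eq]
      constructor
      · rintro ⟨i', hi', hmem⟩
        exact ⟨i'.1, Finset.mem_inter.2 ⟨hi', hmem⟩⟩
      · rintro ⟨i, hi⟩
        rcases Finset.mem_inter.1 hi with ⟨h1, h2⟩
        exact ⟨⟨i, Finset.disjoint_left.1 hdisj h1⟩, h1, h2⟩
    have hEj_le : ∀ j, μ n (⋃ i' ∈ F, B (i', j)) ≤ ENNReal.ofReal q := by
      intro j
      rw [aux_union_meas hB (hindep n) F j hp0.le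
        (fun i' _ => hprob n j i'.1 i'.2)]
      have e1 : ENNReal.ofReal (1 - p) ^ F.card = ENNReal.ofReal ((1 - p) ^ S.card) := by
        rw [ENNReal.ofReal_pow h1p0.le, hFcard]
      have e2 : ENNReal.ofReal q = 1 - ENNReal.ofReal ((1 - p) ^ l) := by
        rw [hq_def, ENNReal.ofReal_sub _ hpl0.le, ENNReal.ofReal_one]
      rw [e1, e2]
      refine tsub_le_tsub_left (ENNReal.ofReal_le_ofReal ?_) 1
      exact pow_le_pow_of_le_one h1p0.le h1p1.le hcard
    have hIU := aux_inter_union hB (hindep n) F (Finset.univ : Finset (Fin ⌈C * Real.log n⌉₊))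
    have hInter : (⋂ j, {ω : Ω n | (S ∩ A n j ω).Nonempty})
        = ⋂ j ∈ (Finset.univ : Finset (Fin ⌈C * Real.log n⌉₊)), ⋃ i' ∈ F, B (i', j) := by
      simp [hEq]
    rw [hInter, hIU]
    calc ∏ j ∈ Finset.univ, μ n (⋃ i' ∈ F, B (i', j))
        ≤ ∏ _j ∈ (Finset.univ : Finset (Fin ⌈C * Real.log n⌉₊)), ENNReal.ofReal q :=
          Finset.prod_le_prod' fun j _ => hEj_le j
      _ = ENNReal.ofReal q ^ M n := by
          rw [Finset.prod_const, Finset.card_univ, Fintype.card_fin]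
  -- union bound
  have hbad_bound : ∀ n : ℕ, 1 ≤ n →
      (μ n (good n)ᶜ).toReal ≤ ((l + 1) * n ^ l : ℕ) * q ^ M n := by
    intro n hn1
    set 𝒮 : Finset (Finset (Fin n)) :=
      Finset.univ.filter (fun S => Disjoint S (T n) ∧ S.card ≤ l) with h𝒮_def
    have hsub : (good n)ᶜ ⊆ ⋃ S ∈ 𝒮, ⋂ j, {ω | (S ∩ A n j ω).Nonempty} := by
      intro ω hω
      have hω' : ¬ (∀ S : Finset (Fin n), Disjoint S (T n) → S.card ≤ l →
          ∃ j, S ∩ A n j ω = ∅) := hω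
      push_neg at hω'
      obtain ⟨S, hd, hc, hno⟩ := hω'
      refine Set.mem_biUnion (Finset.mem_filter.2 ⟨Finset.mem_univ S, hd, hc⟩) ?_
      exact Set.mem_iInter.2 fun j => hno j
    have hmeasure : μ n ((good n)ᶜ) ≤ (𝒮.card : ENNReal) * ENNReal.ofReal q ^ M n := by
      calc μ n ((good n)ᶜ) ≤ μ n (⋃ S ∈ 𝒮, ⋂ j, {ω | (S ∩ A n j ω).Nonempty}) :=
            measure_mono hsub
        _ ≤ ∑ S ∈ 𝒮, μ n (⋂ j, {ω | (S ∩ A n j ω).Nonempty}) :=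
            measure_biUnion_finset_le 𝒮 _
        _ ≤ ∑ _S ∈ 𝒮, ENNReal.ofReal q ^ M n := by
            refine Finset.sum_le_sum fun S hS => ?_
            rcases Finset.mem_filter.1 hS with ⟨-, hd, hc⟩
            exact hperS n S hd hc
        _ = (𝒮.card : ENNReal) * ENNReal.ofReal q ^ M n := by
            rw [Finset.sum_const, nsmul_eq_mul]
    have hScard : 𝒮.card ≤ (l + 1) * n ^ l := by
      have hsub2 : 𝒮 ⊆ (Finset.range (l + 1)).biUnion
          (fun k => Finset.powersetCard k Finset.univ) := by
        intro S hS
        rcases Finset.mem_filter.1 hS with ⟨-, -, hc⟩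
        exact Finset.mem_biUnion.2 ⟨S.card, Finset.mem_range.2 (Nat.lt_succ_of_le hc),
          Finset.mem_powersetCard_univ.2 rfl⟩
      calc 𝒮.card ≤ ((Finset.range (l + 1)).biUnion
            (fun k => Finset.powersetCard k Finset.univ)).card := Finset.card_le_card hsub2
        _ ≤ ∑ k ∈ Finset.range (l + 1), (Finset.powersetCard k
            (Finset.univ : Finset (Fin n))).card := Finset.card_biUnion_le
        _ ≤ ∑ _k ∈ Finset.range (l + 1), n ^ l := by
            refine Finset.sum_le_sum fun k hk => ?_
            rw [Finset.card_powersetCard, Finset.card_univ, Fintype.card_fin]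
            exact (Nat.choose_le_pow n k).trans
              (Nat.pow_le_pow_right hn1 (Nat.lt_succ_iff.1 (Finset.mem_range.1 hk)))
        _ = (l + 1) * n ^ l := by rw [Finset.sum_const, Finset.card_range, smul_eq_mul]
    have hne : (𝒮.card : ENNReal) * ENNReal.ofReal q ^ M n ≠ ⊤ :=
      ENNReal.mul_ne_top (ENNReal.natCast_ne_top _) (ENNReal.pow_ne_top ENNReal.ofReal_ne_top)
    calc (μ n ((good n)ᶜ)).toReal
        ≤ ((𝒮.card : ENNReal) * ENNReal.ofReal q ^ M n).toReal :=
          ENNReal.toReal_mono hne hmeasure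
      _ = (𝒮.card : ℝ) * q ^ M n := by
          rw [ENNReal.toReal_mul, ENNReal.toReal_pow, ENNReal.toReal_ofReal hq0.le,
            ENNReal.toReal_natCast]
      _ ≤ ((l + 1) * n ^ l : ℕ) * q ^ M n := by
          refine mul_le_mul_of_nonneg_right ?_ (pow_nonneg hq0.le _)
          exact_mod_cast hScard
  -- analytic bound
  have hg : Tendsto (fun n : ℕ => (((l : ℝ) + 1) * (n : ℝ) ^ r)) atTop (nhds 0) := by
    have h0 : Tendsto (fun x : ℝ => x ^ r) atTop (nhds 0) := by
      have := tendsto_rpow_neg_atTop (neg_pos.2 hr)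
      simpa [neg_neg] using this
    have h1 : Tendsto (fun n : ℕ => ((n : ℝ)) ^ r) atTop (nhds 0) :=
      h0.comp tendsto_natCast_atTop_atTop
    simpa using h1.const_mul ((l : ℝ) + 1)
  have hev : ∀ᶠ n : ℕ in atTop, (μ n (good n)ᶜ).toReal ≤ ((l : ℝ) + 1) * (n : ℝ) ^ r := by
    filter_upwards [eventually_ge_atTop 2] with n hn
    have hn1 : (1 : ℝ) ≤ (n : ℝ) := by exact_mod_cast Nat.one_le_of_lt hn
    have hn0 : (0 : ℝ) < (n : ℝ) := by linarith
    have hlogn : 0 ≤ Real.log n := Real.log_nonneg hn1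
    have step1 : (μ n (good n)ᶜ).toReal ≤ ((l + 1) * n ^ l : ℕ) * q ^ M n :=
      hbad_bound n (by omega)
    have step2 : (((l + 1) * n ^ l : ℕ) : ℝ) = ((l : ℝ) + 1) * (n : ℝ) ^ l := by
      push_cast; ring
    have step3 : q ^ M n ≤ (n : ℝ) ^ (C * Real.log q) := by
      have hMn : C * Real.log n ≤ (M n : ℝ) := Nat.le_ceil _
      have : q ^ (M n : ℝ) ≤ q ^ (C * Real.log n) :=
        Real.rpow_le_rpow_of_exponent_ge hq0 hq1.le hMn
      rw [Real.rpow_natCast] at this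
      refine this.trans_eq ?_
      rw [Real.rpow_def_of_pos hq0, Real.rpow_def_of_pos hn0]
      congr 1
      ring
    have step4 : (n : ℝ) ^ l * ((n : ℝ) ^ (C * Real.log q)) = (n : ℝ) ^ r := by
      rw [← Real.rpow_natCast (n : ℝ) l, ← Real.rpow_add hn0, hr_def]
    calc (μ n (good n)ᶜ).toReal ≤ ((l + 1) * n ^ l : ℕ) * q ^ M n := step1
      _ = ((l : ℝ) + 1) * ((n : ℝ) ^ l * q ^ M n) := by rw [step2]; ring
      _ ≤ ((l : ℝ) + 1) * ((n : ℝ) ^ l * (n : ℝ) ^ (C * Real.log q)) := by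
          refine mul_le_mul_of_nonneg_left (mul_le_mul_of_nonneg_left step3 ?_) ?_
          · positivity
          · positivity
      _ = ((l : ℝ) + 1) * (n : ℝ) ^ r := by rw [step4]
  have hbad0 : Tendsto (fun n : ℕ => (μ n (good n)ᶜ).toReal) atTop (nhds 0) :=
    squeeze_zero' (Eventually.of_forall fun n => ENNReal.toReal_nonneg) hev hg
  have hfinal : (fun n : ℕ => (μ n (good n)).toReal)
      = fun n : ℕ => 1 - (μ n (good n)ᶜ).toReal := by
    funext n
    have h1 : (μ n (good n)ᶜ).toReal = 1 - (μ n (good n)).toReal := by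
      rw [prob_compl_eq_one_sub (hgood_meas n), ENNReal.toReal_sub_of_le prob_le_one
        ENNReal.one_ne_top, ENNReal.toReal_one]
    linarith
  show Tendsto (fun n : ℕ => (μ n (good n)).toReal) atTop (nhds 1)
  rw [hfinal]
  simpa using tendsto_const_nhds.sub hbad0
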